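/- arXiv:2112.04870 — 2 statements merged into one kernel-verified Lean document; each statement's English description precedes it below -/
import Mathlib

section
/- Let X be the stationary Ornstein–Uhlenbeck process with dX_t = −(1+κ)X_t dt + √2 dB_t (σ = 1), and define h(x,y) = Δ e^{−(1+κ)Δ} x² and ℓ(x,y) = x²(y² − e^{−2(1+κ)Δ} x²). Then (E[h(X_0,X_Δ)])^{-2} · E[ℓ(X_0,X_Δ)] = (e^{2(1+κ)Δ} − 1)/Δ². -/
open MeasureTheory ProbabilityTheory

section Helpers
open Real Set

lemma intPow {b : ℝ} (hb : 0 < b) (n : ℕ) :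
    Integrable (fun x : ℝ => x ^ n * Real.exp (-b * x ^ 2)) := by
  have h := integrable_rpow_mul_exp_neg_mul_sq hb (s := (n : ℝ))
    (lt_of_lt_of_le neg_one_lt_zero (Nat.cast_nonneg n))
  simpa [Real.rpow_natCast] using h

lemma ioiMoment {b : ℝ} (hb : 0 < b) (n : ℕ) :
    ∫ x in Ioi (0:ℝ), x ^ n * Real.exp (-b * x ^ 2)
      = b ^ (-((n:ℝ) + 1) / 2) * (1 / 2) * Real.Gamma (((n:ℝ) + 1) / 2) := by
  have h := integral_rpow_mul_exp_neg_mul_rpow (p := 2) (q := (n:ℝ)) two_pos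
    (lt_of_lt_of_le neg_one_lt_zero (Nat.cast_nonneg n)) hb
  have h2 : ∀ x : ℝ, x ^ (2:ℝ) = x ^ (2:ℕ) := fun x => by
    rw [show (2:ℝ) = ((2:ℕ):ℝ) by norm_num, Real.rpow_natCast]
  simpa [Real.rpow_natCast, h2] using h

lemma iicIoi {b : ℝ} (hb : 0 < b) (n : ℕ) :
    ∫ x in Iic (0:ℝ), x ^ n * Real.exp (-b * x ^ 2)
      = ∫ x in Ioi (0:ℝ), (-x) ^ n * Real.exp (-b * x ^ 2) := by
  rw [show (Iic (0:ℝ)) = Iic (-0) by norm_num, ← integral_comp_neg_Ioi]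
  congr 1; funext x; ring_nf

lemma evenMoment {b : ℝ} (hb : 0 < b) (n : ℕ) (hn : Even n) :
    ∫ x : ℝ, x ^ n * Real.exp (-b * x ^ 2)
      = b ^ (-((n:ℝ) + 1) / 2) * Real.Gamma (((n:ℝ) + 1) / 2) := by
  rw [← intervalIntegral.integral_Iic_add_Ioi ((intPow hb n).integrableOn) ((intPow hb n).integrableOn),
    iicIoi hb n]
  simp_rw [hn.neg_pow]
  rw [ioiMoment hb n]; ring

lemma oddMoment {b : ℝ} (hb : 0 < b) (n : ℕ) (hn : Odd n) :
    ∫ x : ℝ, x ^ n * Real.exp (-b * x ^ 2) = 0 := by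
  rw [← intervalIntegral.integral_Iic_add_Ioi ((intPow hb n).integrableOn) ((intPow hb n).integrableOn),
    iicIoi hb n]
  simp_rw [hn.neg_pow, neg_mul, integral_neg]
  ring

lemma pdfCoe {v : NNReal} :
    (fun x => gaussianPDF 0 v x)
      = fun x => ((Real.toNNReal (gaussianPDFReal 0 v x) : NNReal) : ENNReal) := rfl

lemma gaussInt {v : NNReal} (hv : v ≠ 0) (g : ℝ → ℝ)
    (h : Integrable (fun x => gaussianPDFReal 0 v x * g x)) :
    Integrable g (gaussianReal 0 v) := by
  rw [gaussianReal_of_var_ne_zero 0 hv, gaussianPDF_def]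
  simp only [ENNReal.ofReal]
  rw [
    integrable_withDensity_iff_integrable_smul
      ((measurable_gaussianPDFReal 0 v).real_toNNReal)]
  refine h.congr (Filter.Eventually.of_forall fun x => ?_)
  simp [NNReal.smul_def, Real.coe_toNNReal _ (gaussianPDFReal_nonneg 0 v x)]

lemma gaussEval {v : NNReal} (hv : v ≠ 0) (g : ℝ → ℝ) :
    ∫ x, g x ∂(gaussianReal 0 v)
      = ∫ x, gaussianPDFReal 0 v x * g x := by
  rw [gaussianReal_of_var_ne_zero 0 hv, gaussianPDF_def]
  simp only [ENNReal.ofReal]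
  rw [
    integral_withDensity_eq_integral_smul
      ((measurable_gaussianPDFReal 0 v).real_toNNReal)]
  refine integral_congr_ae (Filter.Eventually.of_forall fun x => ?_)
  simp [NNReal.smul_def, Real.coe_toNNReal _ (gaussianPDFReal_nonneg 0 v x)]

lemma pdfForm {v : NNReal} (hv : 0 < (v:ℝ)) (x : ℝ) :
    gaussianPDFReal 0 v x
      = (Real.sqrt (2 * Real.pi * v))⁻¹ * Real.exp (-(2 * (v:ℝ))⁻¹ * x ^ 2) := by
  rw [gaussianPDFReal]
  congr 1
  rw [sub_zero]
  congr 1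
  field_simp

lemma gaussPowInt {v : NNReal} (hv : 0 < (v:ℝ)) (n : ℕ) :
    Integrable (fun x : ℝ => x ^ n) (gaussianReal 0 v) := by
  have hb : 0 < (2 * (v:ℝ))⁻¹ := by positivity
  have hb' := integrable_rpow_mul_exp_neg_mul_sq hb (s := (n : ℝ))
    (lt_of_lt_of_le neg_one_lt_zero (Nat.cast_nonneg n))
  simp only [Real.rpow_natCast] at hb'
  refine gaussInt (by exact_mod_cast hv.ne') _
    ((hb'.const_mul ((Real.sqrt (2 * Real.pi * v))⁻¹)).congr ?_)
  filter_upwards with x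
  rw [pdfForm hv]; ring

lemma gaussMoment {v : NNReal} (hv : 0 < (v:ℝ)) (n : ℕ) :
    ∫ x, x ^ n ∂(gaussianReal 0 v)
      = (Real.sqrt (2 * Real.pi * v))⁻¹ *
          ∫ x : ℝ, x ^ n * Real.exp (-(2 * (v:ℝ))⁻¹ * x ^ 2) := by
  rw [gaussEval (by exact_mod_cast hv.ne'), ← integral_const_mul]
  congr 1; funext x; rw [pdfForm hv]; ring

lemma gaussCube {v : NNReal} (hv : 0 < (v:ℝ)) :
    ∫ x, x ^ 3 ∂(gaussianReal 0 v) = 0 := by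
  rw [gaussMoment hv 3, oddMoment (by positivity) 3 (by decide), mul_zero]

lemma gaussSq {v : NNReal} (hv : 0 < (v:ℝ)) :
    ∫ x, x ^ 2 ∂(gaussianReal 0 v) = v := by
  rw [gaussMoment hv 2, evenMoment (by positivity) 2 (by norm_num)]
  have h3 : (-(((2:ℕ):ℝ) + 1) / 2) = -(3/2 : ℝ) := by norm_num
  have h32 : ((((2:ℕ):ℝ)) + 1) / 2 = 1/2 + 1 := by norm_num
  rw [h3, h32, Real.Gamma_add_one (by norm_num), Real.Gamma_one_half_eq]
  have ht : (0:ℝ) < 2 * (v:ℝ) := by positivity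
  have h1 : ((2 * (v:ℝ))⁻¹) ^ (-(3/2 : ℝ)) = (2 * (v:ℝ)) ^ ((3/2 : ℝ)) := by
    rw [Real.inv_rpow ht.le, Real.rpow_neg ht.le, inv_inv]
  rw [h1, show (3/2:ℝ) = 1 + 1/2 by norm_num, Real.rpow_add ht, Real.rpow_one,
    ← Real.sqrt_eq_rpow, show 2 * Real.pi * (v:ℝ) = (2*(v:ℝ)) * Real.pi by ring,
    Real.sqrt_mul ht.le]
  have hst : (0:ℝ) < Real.sqrt (2*(v:ℝ)) := Real.sqrt_pos.mpr ht
  have hsp : (0:ℝ) < Real.sqrt Real.pi := Real.sqrt_pos.mpr Real.pi_pos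
  field_simp

end Helpers

/-- Asymptotic variance of the eigenfunction estimator for the stationary OU process:
with X_0 ~ N(0, 1/(1+κ)), ξ ~ N(0, (1−e^{−2(1+κ)Δ})/(1+κ)) independent of X_0 and
X_Δ = e^{−(1+κ)Δ} X_0 + ξ, one has
(E[h(X_0,X_Δ)])⁻² · E[ℓ(X_0,X_Δ)] = (e^{2(1+κ)Δ} − 1)/Δ², where
h(x,y) = Δ e^{−(1+κ)Δ} x² and ℓ(x,y) = x²(y² − e^{−2(1+κ)Δ} x²). -/
theorem stmt5 {Ω : Type*} [MeasurableSpace Ω] (μ : Measure Ω) [IsProbabilityMeasure μ]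
    (κ Δ : ℝ) (hκ : -1 < κ) (hΔ : 0 < Δ)
    (X0 ξ : Ω → ℝ) (hmX0 : Measurable X0) (hmξ : Measurable ξ)
    (hindep : IndepFun X0 ξ μ)
    (v0 vξ : NNReal) (hv0 : (v0 : ℝ) = 1 / (1 + κ))
    (hvξ : (vξ : ℝ) = (1 - Real.exp (-2 * (1 + κ) * Δ)) / (1 + κ))
    (hX0law : μ.map X0 = gaussianReal 0 v0)
    (hξlaw : μ.map ξ = gaussianReal 0 vξ)
    (XΔ : Ω → ℝ) (hXΔ : ∀ ω, XΔ ω = Real.exp (-(1 + κ) * Δ) * X0 ω + ξ ω) :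
    ((∫ ω, Δ * Real.exp (-(1 + κ) * Δ) * (X0 ω) ^ 2 ∂μ) ^ 2)⁻¹ *
      ∫ ω, (X0 ω) ^ 2 * ((XΔ ω) ^ 2 - Real.exp (-2 * (1 + κ) * Δ) * (X0 ω) ^ 2) ∂μ
      = (Real.exp (2 * (1 + κ) * Δ) - 1) / Δ ^ 2 := by
  set a := Real.exp (-(1 + κ) * Δ) with ha_def
  have h1κ : (0:ℝ) < 1 + κ := by linarith
  have hv0p : 0 < (v0:ℝ) := by rw [hv0]; positivity
  have hexp1 : Real.exp (-2 * (1 + κ) * Δ) < 1 := by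
    exact Real.exp_lt_one_iff.mpr (by nlinarith)
  have hvξp : 0 < (vξ:ℝ) := by rw [hvξ]; apply div_pos (by linarith) h1κ
  have ha2 : Real.exp (-2 * (1 + κ) * Δ) = a ^ 2 := by
    rw [ha_def, sq, ← Real.exp_add]; congr 1; ring
  have hap : 0 < a := Real.exp_pos _
  -- measurability of powers on ℝ
  have hsm : ∀ n : ℕ, ∀ ν : Measure ℝ, AEStronglyMeasurable (fun x : ℝ => x ^ n) ν :=
    fun n ν => (measurable_id.pow_const n).aestronglyMeasurable
  -- moments of X0
  have EX2 : ∫ ω, (X0 ω) ^ 2 ∂μ = (v0:ℝ) := by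
    rw [← gaussSq hv0p, ← hX0law]
    exact (integral_map hmX0.aemeasurable (hsm 2 _)).symm
  have EX3 : ∫ ω, (X0 ω) ^ 3 ∂μ = 0 := by
    rw [← gaussCube hv0p, ← hX0law]
    exact (integral_map hmX0.aemeasurable (hsm 3 _)).symm
  have Eξ2 : ∫ ω, (ξ ω) ^ 2 ∂μ = (vξ:ℝ) := by
    rw [← gaussSq hvξp, ← hξlaw]
    exact (integral_map hmξ.aemeasurable (hsm 2 _)).symm
  -- integrability
  have IX : ∀ n : ℕ, Integrable (fun ω => (X0 ω) ^ n) μ := fun n => by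
    have := (integrable_map_measure (hsm n _) hmX0.aemeasurable).mp
      (by rw [hX0law]; exact gaussPowInt hv0p n)
    exact this
  have Iξ : ∀ n : ℕ, Integrable (fun ω => (ξ ω) ^ n) μ := fun n => by
    have := (integrable_map_measure (hsm n _) hmξ.aemeasurable).mp
      (by rw [hξlaw]; exact gaussPowInt hvξp n)
    exact this
  -- independence of powers
  have hI3 : IndepFun (fun ω => (X0 ω) ^ 3) (fun ω => (ξ ω) ^ 1) μ :=
    hindep.comp (measurable_id.pow_const 3) (measurable_id.pow_const 1)
  have hI22 : IndepFun (fun ω => (X0 ω) ^ 2) (fun ω => (ξ ω) ^ 2) μ :=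
    hindep.comp (measurable_id.pow_const 2) (measurable_id.pow_const 2)
  have Ecross : ∫ ω, (X0 ω) ^ 3 * (ξ ω) ^ 1 ∂μ = 0 := by
    have := hI3.integral_mul_eq_mul_integral (IX 3).aestronglyMeasurable (Iξ 1).aestronglyMeasurable
    rw [show (fun ω => (X0 ω) ^ 3 * (ξ ω) ^ 1) =
      (fun ω => (X0 ω) ^ 3) * (fun ω => (ξ ω) ^ 1) from rfl, this, EX3, zero_mul]
  have E22 : ∫ ω, (X0 ω) ^ 2 * (ξ ω) ^ 2 ∂μ = (v0:ℝ) * (vξ:ℝ) := by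
    have := hI22.integral_mul_eq_mul_integral (IX 2).aestronglyMeasurable (Iξ 2).aestronglyMeasurable
    rw [show (fun ω => (X0 ω) ^ 2 * (ξ ω) ^ 2) =
      (fun ω => (X0 ω) ^ 2) * (fun ω => (ξ ω) ^ 2) from rfl, this, EX2, Eξ2]
  have IX3ξ : Integrable (fun ω => (X0 ω) ^ 3 * (ξ ω) ^ 1) μ := hI3.integrable_mul (IX 3) (Iξ 1)
  have I22 : Integrable (fun ω => (X0 ω) ^ 2 * (ξ ω) ^ 2) μ := hI22.integrable_mul (IX 2) (Iξ 2)
  -- the numerator integral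
  have hnum : ∫ ω, (X0 ω) ^ 2 * ((XΔ ω) ^ 2 - Real.exp (-2 * (1 + κ) * Δ) * (X0 ω) ^ 2) ∂μ
      = (v0:ℝ) * (vξ:ℝ) := by
    have heq : (fun ω => (X0 ω) ^ 2 * ((XΔ ω) ^ 2 - Real.exp (-2 * (1 + κ) * Δ) * (X0 ω) ^ 2))
        = fun ω => 2 * a * ((X0 ω) ^ 3 * (ξ ω) ^ 1) + (X0 ω) ^ 2 * (ξ ω) ^ 2 := by
      funext ω; rw [hXΔ ω, ha2]; ring
    rw [heq, integral_add (IX3ξ.const_mul _) I22, integral_const_mul, Ecross, E22]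
    ring
  have hden : ∫ ω, Δ * a * (X0 ω) ^ 2 ∂μ = Δ * a * (v0:ℝ) := by
    rw [integral_const_mul, EX2]
  rw [hnum, hden, hv0, hvξ, ha2]
  have hprod : Real.exp (2 * (1 + κ) * Δ) * a ^ 2 = 1 := by
    rw [ha_def, sq, ← Real.exp_add, ← Real.exp_add, show 2 * (1 + κ) * Δ + (-(1 + κ) * Δ +
      -(1 + κ) * Δ) = 0 by ring, Real.exp_zero]
  have hΔ' : Δ ≠ 0 := hΔ.ne'
  have ha' : a ≠ 0 := hap.ne'
  have h1κ' : (1:ℝ) + κ ≠ 0 := h1κ.ne'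
  field_simp
  have hE : Real.exp (2 * (1 + κ) * Δ) = Real.exp (Δ * (1 + κ) * 2) := by ring_nf
  linear_combination (-1) * hprod + a ^ 2 * hE
end

section
/- Let G : Θ → ℝ^p be C¹ on a compact set Θ ⊂ ℝ^p, and let (G_N)_{N≥1} be C¹ functions converging to G uniformly on Θ together with their Jacobians H_N → H uniformly. Suppose θ₀ ∈ interior(Θ) satisfies G(θ₀) = 0 and det H(θ₀) ≠ 0, and that θ₀ is the unique zero of G in some closed ball B̄_ε(θ₀) ⊂ Θ. Then there exist N₀ and a constant C such that for all N > N₀ there exists θ_N ∈ B_ε(θ₀) with G_N(θ_N) = 0, det H_N(θ_N) ≠ 0, and ‖θ_N − θ₀‖ ≤ C ‖G_N(θ_N) − G(θ_N)‖ ≤ C sup_{θ∈Θ}‖G_N(θ) − G(θ)‖. -/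
open Metric NNReal

set_option maxHeartbeats 1000000

/-- Deterministic core of Lemma 4.4: existence and quantitative convergence of zeros of the
perturbed estimating functions G_N towards the zero θ₀ of the limiting function G. -/
theorem stmt10 {p : ℕ}
    (Θ : Set (EuclideanSpace ℝ (Fin p)))
    (hΘ : IsCompact Θ)
    (G : EuclideanSpace ℝ (Fin p) → EuclideanSpace ℝ (Fin p))
    (GN : ℕ → EuclideanSpace ℝ (Fin p) → EuclideanSpace ℝ (Fin p))
    (hG : ContDiffOn ℝ 1 G Θ) (hGN : ∀ N, ContDiffOn ℝ 1 (GN N) Θ)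
    (hGconv : TendstoUniformlyOn GN G Filter.atTop Θ)
    (hHconv : TendstoUniformlyOn (fun N θ => fderiv ℝ (GN N) θ) (fun θ => fderiv ℝ G θ)
      Filter.atTop Θ)
    (θ₀ : EuclideanSpace ℝ (Fin p)) (hθ₀ : θ₀ ∈ interior Θ)
    (hGθ₀ : G θ₀ = 0) (hdet : (fderiv ℝ G θ₀).det ≠ 0)
    (ε : ℝ) (hε : 0 < ε) (hball : closedBall θ₀ ε ⊆ Θ)
    (huniq : ∀ θ ∈ closedBall θ₀ ε, G θ = 0 → θ = θ₀) :
    ∃ (N₀ : ℕ) (C : ℝ), 0 < C ∧ ∀ N > N₀, ∃ θN ∈ ball θ₀ ε,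
      GN N θN = 0 ∧ (fderiv ℝ (GN N) θN).det ≠ 0 ∧
      ‖θN - θ₀‖ ≤ C * ‖GN N θN - G θN‖ ∧
      C * ‖GN N θN - G θN‖ ≤ C * sSup ((fun θ => ‖GN N θ - G θ‖) '' Θ) := by
  classical
  have hθ₀Θ : θ₀ ∈ Θ := interior_subset hθ₀
  rcases subsingleton_or_nontrivial (EuclideanSpace ℝ (Fin p)) with hsub | hnt
  · -- degenerate case: the space is trivial
    have hz : ∀ v : EuclideanSpace ℝ (Fin p), ‖v‖ = 0 := fun v => by
      rw [Subsingleton.elim v 0, norm_zero]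
    refine ⟨0, 1, one_pos, fun N _ => ⟨θ₀, mem_ball_self hε, Subsingleton.elim _ _, ?_, ?_, ?_⟩⟩
    · have h1 : fderiv ℝ (GN N) θ₀ = ContinuousLinearMap.id ℝ _ := Subsingleton.elim _ _
      rw [h1]
      have h2 : (ContinuousLinearMap.id ℝ (EuclideanSpace ℝ (Fin p))).det = 1 := by
        rw [ContinuousLinearMap.det, ContinuousLinearMap.coe_id, LinearMap.det_id]
      rw [h2]
      norm_num
    · rw [hz (θ₀ - θ₀)]
      positivity
    · have himg : (fun θ => ‖GN N θ - G θ‖) '' Θ = {0} :=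
        Set.eq_singleton_iff_nonempty_unique_mem.2
          ⟨⟨_, Set.mem_image_of_mem _ hθ₀Θ⟩, by rintro x ⟨θ, -, rfl⟩; exact hz _⟩
      rw [himg, csSup_singleton, hz (GN N θ₀ - G θ₀)]
  · -- main case
    set H₀ := fderiv ℝ G θ₀ with hH₀def
    set Φ := H₀.toContinuousLinearEquivOfDetNeZero hdet with hΦdef
    set A := (Φ.symm : EuclideanSpace ℝ (Fin p) →L[ℝ] EuclideanSpace ℝ (Fin p)) with hAdef
    have hΦapp : ∀ v, Φ v = H₀ v := fun v => by
      rw [hΦdef]; exact ContinuousLinearMap.toContinuousLinearEquivOfDetNeZero_apply _ _ _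
    have hAH₀ : ∀ v, A (H₀ v) = v := fun v => by
      show Φ.symm (H₀ v) = v
      rw [← hΦapp v]
      exact Φ.symm_apply_apply v
    set a := ‖A‖ with hadef
    have hvleA : ∀ v, ‖v‖ ≤ a * ‖H₀ v‖ := fun v => by
      calc ‖v‖ = ‖A (H₀ v)‖ := by rw [hAH₀]
        _ ≤ a * ‖H₀ v‖ := A.le_opNorm _
    have ha : 0 < a := by
      obtain ⟨v, hv⟩ := exists_ne (0 : EuclideanSpace ℝ (Fin p))
      rcases (norm_nonneg A).lt_or_eq with h | h
      · exact h
      · exfalso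
        apply hv
        have h1 := hvleA v
        have h2 : a = 0 := by rw [hadef, ← h]
        rw [h2, zero_mul] at h1
        exact norm_le_zero_iff.1 h1
    set δ := 1 / (4 * a) with hδdef
    have hδ : 0 < δ := by positivity
    -- continuity of the Jacobian of G on the interior
    have hHcont : ContinuousOn (fun θ => fderiv ℝ G θ) (interior Θ) :=
      (hG.mono interior_subset).continuousOn_fderiv_of_isOpen isOpen_interior le_rfl
    have hHat : ContinuousAt (fun θ => fderiv ℝ G θ) θ₀ :=
      hHcont.continuousAt (isOpen_interior.mem_nhds hθ₀)
    obtain ⟨r₂, hr₂0, hr₂⟩ := Metric.continuousAt_iff.1 hHat δ hδ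
    obtain ⟨r₁, hr₁0, hr₁⟩ := Metric.nhds_basis_closedBall.mem_iff.1
      (isOpen_interior.mem_nhds hθ₀)
    set r := min (min r₁ (r₂ / 2)) (ε / 2) with hrdef
    have hr0 : 0 < r := lt_min (lt_min hr₁0 (by positivity)) (by positivity)
    have hrint : closedBall θ₀ r ⊆ interior Θ :=
      (closedBall_subset_closedBall ((min_le_left _ _).trans (min_le_left _ _))).trans hr₁
    have hrΘ : closedBall θ₀ r ⊆ Θ := hrint.trans interior_subset
    have hrε : r < ε := (min_le_right _ _).trans_lt (by linarith)
    have hHnear : ∀ θ ∈ closedBall θ₀ r, ‖fderiv ℝ G θ - H₀‖ ≤ δ := by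
      intro θ hθ
      have h2 : r ≤ r₂ / 2 := (min_le_left _ _).trans (min_le_right _ _)
      have h1 : dist θ θ₀ < r₂ := by
        have := mem_closedBall.1 hθ
        linarith
      have h3 := hr₂ h1
      rw [dist_eq_norm] at h3
      exact h3.le
    -- choose N₀ from the uniform convergence hypotheses
    have hεv : 0 < r / (2 * a) := by positivity
    obtain ⟨N₁, hN₁⟩ := Filter.eventually_atTop.1
      ((Metric.tendstoUniformlyOn_iff.1 hGconv) (r / (2 * a)) hεv)
    obtain ⟨N₂, hN₂⟩ := Filter.eventually_atTop.1
      ((Metric.tendstoUniformlyOn_iff.1 hHconv) δ hδ)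
    refine ⟨max N₁ N₂, 2 * a, by positivity, fun N hN => ?_⟩
    have hval : ∀ θ ∈ Θ, ‖GN N θ - G θ‖ < r / (2 * a) := by
      intro θ hθ
      have := hN₁ N ((le_max_left _ _).trans hN.le) θ hθ
      rwa [dist_eq_norm, norm_sub_rev] at this
    have hder : ∀ θ ∈ Θ, ‖fderiv ℝ (GN N) θ - fderiv ℝ G θ‖ < δ := by
      intro θ hθ
      have := hN₂ N ((le_max_right _ _).trans hN.le) θ hθ
      rwa [dist_eq_norm, norm_sub_rev] at this
    -- differentiability at interior points
    have hGdiff : ∀ θ ∈ interior Θ, HasFDerivAt G (fderiv ℝ G θ) θ := fun θ hθ =>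
      ((((hG.mono interior_subset).differentiableOn one_ne_zero).differentiableAt
        (isOpen_interior.mem_nhds hθ))).hasFDerivAt
    have hGNdiff : ∀ θ ∈ interior Θ, HasFDerivAt (GN N) (fderiv ℝ (GN N) θ) θ := fun θ hθ =>
      (((((hGN N).mono interior_subset).differentiableOn one_ne_zero).differentiableAt
        (isOpen_interior.mem_nhds hθ))).hasFDerivAt
    -- the Newton-type map
    set F : EuclideanSpace ℝ (Fin p) → EuclideanSpace ℝ (Fin p) :=
      fun θ => θ - A (GN N θ) with hFdef
    have hFderiv : ∀ θ ∈ closedBall θ₀ r,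
        HasFDerivAt F (ContinuousLinearMap.id ℝ _ - A.comp (fderiv ℝ (GN N) θ)) θ := by
      intro θ hθ
      exact (hasFDerivAt_id θ).sub ((A.hasFDerivAt).comp θ (hGNdiff θ (hrint hθ)))
    have hHNnear : ∀ θ ∈ closedBall θ₀ r, ‖H₀ - fderiv ℝ (GN N) θ‖ ≤ δ + δ := by
      intro θ hθ
      calc ‖H₀ - fderiv ℝ (GN N) θ‖
          ≤ ‖H₀ - fderiv ℝ G θ‖ + ‖fderiv ℝ G θ - fderiv ℝ (GN N) θ‖ :=
            norm_sub_le_norm_sub_add_norm_sub _ _ _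
        _ ≤ δ + δ := add_le_add (by rw [norm_sub_rev]; exact hHnear θ hθ)
            (by rw [norm_sub_rev]; exact (hder θ (hrΘ hθ)).le)
    have hDbound : ∀ θ ∈ closedBall θ₀ r,
        ‖ContinuousLinearMap.id ℝ _ - A.comp (fderiv ℝ (GN N) θ)‖ ≤ 1 / 2 := by
      intro θ hθ
      have hid : ContinuousLinearMap.id ℝ _ - A.comp (fderiv ℝ (GN N) θ)
          = A.comp (H₀ - fderiv ℝ (GN N) θ) := by
        ext v
        simp [map_sub, hAH₀ v]
      rw [hid]
      calc ‖A.comp (H₀ - fderiv ℝ (GN N) θ)‖ ≤ a * ‖H₀ - fderiv ℝ (GN N) θ‖ :=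
            A.opNorm_comp_le _
        _ ≤ a * (δ + δ) := mul_le_mul_of_nonneg_left (hHNnear θ hθ) ha.le
        _ = 1 / 2 := by rw [hδdef]; field_simp [ha.ne']; ring
    have hlip : ∀ x ∈ closedBall θ₀ r, ∀ y ∈ closedBall θ₀ r,
        ‖F y - F x‖ ≤ (1 / 2) * ‖y - x‖ := by
      intro x hx y hy
      exact (convex_closedBall θ₀ r).norm_image_sub_le_of_norm_hasFDerivWithin_le
        (fun θ hθ => (hFderiv θ hθ).hasFDerivWithinAt) hDbound hx hy
    have hFθ₀ : ‖F θ₀ - θ₀‖ ≤ r / 2 := by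
      have h1 : F θ₀ - θ₀ = -(A (GN N θ₀)) := by
        rw [hFdef]; simp only [sub_sub_cancel_left]
      rw [h1, norm_neg]
      have h2 : ‖GN N θ₀ - G θ₀‖ < r / (2 * a) := hval θ₀ hθ₀Θ
      rw [hGθ₀, sub_zero] at h2
      calc ‖A (GN N θ₀)‖ ≤ a * ‖GN N θ₀‖ := A.le_opNorm _
        _ ≤ a * (r / (2 * a)) := mul_le_mul_of_nonneg_left h2.le ha.le
        _ = r / 2 := by field_simp [ha.ne']
    have hmaps : Set.MapsTo F (closedBall θ₀ r) (closedBall θ₀ r) := by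
      intro θ hθ
      rw [mem_closedBall, dist_eq_norm]
      have hθr : ‖θ - θ₀‖ ≤ r := by rw [← dist_eq_norm]; exact mem_closedBall.1 hθ
      calc ‖F θ - θ₀‖ ≤ ‖F θ - F θ₀‖ + ‖F θ₀ - θ₀‖ := norm_sub_le_norm_sub_add_norm_sub _ _ _
        _ ≤ (1 / 2) * ‖θ - θ₀‖ + r / 2 :=
            add_le_add (hlip θ₀ (mem_closedBall_self hr0.le) θ hθ) hFθ₀
        _ ≤ (1 / 2) * r + r / 2 := by nlinarith
        _ = r := by ring
    have hlipOn : LipschitzOnWith (1 / 2 : ℝ≥0) F (closedBall θ₀ r) :=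
      (convex_closedBall θ₀ r).lipschitzOnWith_of_nnnorm_hasFDerivWithin_le
        (fun θ hθ => (hFderiv θ hθ).hasFDerivWithinAt)
        (fun θ hθ => by
          have := hDbound θ hθ
          rw [← NNReal.coe_le_coe, coe_nnnorm]
          simpa using this)
    have hcontr : ContractingWith (1 / 2 : ℝ≥0) (hmaps.restrict F (closedBall θ₀ r) (closedBall θ₀ r)) :=
      ⟨by rw [← NNReal.coe_lt_coe]; norm_num, hlipOn.mapsToRestrict hmaps⟩
    obtain ⟨θN, hθNball, hfix, -, -⟩ := ContractingWith.exists_fixedPoint'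
      Metric.isClosed_closedBall.isComplete hmaps hcontr (mem_closedBall_self hr0.le)
      (edist_ne_top _ _)
    have hθNΘ : θN ∈ Θ := hrΘ hθNball
    -- the fixed point is a zero of GN N
    have hAzero : A (GN N θN) = 0 := by
      have h1 : θN - A (GN N θN) = θN := hfix
      rwa [sub_eq_self] at h1
    have hGNzero : GN N θN = 0 := by
      have h2 := Φ.apply_symm_apply (GN N θN)
      rw [show Φ.symm (GN N θN) = A (GN N θN) from rfl, hAzero, map_zero] at h2
      exact h2.symm
    -- nondegeneracy of the Jacobian of GN N at θN
    have hdetN : (fderiv ℝ (GN N) θN).det ≠ 0 := by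
      have hker : ∀ v, fderiv ℝ (GN N) θN v = 0 → v = 0 := by
        intro v hv
        have h1 : ‖H₀ v‖ ≤ (δ + δ) * ‖v‖ := by
          calc ‖H₀ v‖ = ‖(H₀ - fderiv ℝ (GN N) θN) v‖ := by simp [hv]
            _ ≤ ‖H₀ - fderiv ℝ (GN N) θN‖ * ‖v‖ := (H₀ - _).le_opNorm v
            _ ≤ (δ + δ) * ‖v‖ :=
                mul_le_mul_of_nonneg_right (hHNnear θN hθNball) (norm_nonneg v)
        have h2 : ‖v‖ ≤ a * ((δ + δ) * ‖v‖) :=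
          (hvleA v).trans (mul_le_mul_of_nonneg_left h1 ha.le)
        have h3 : a * (δ + δ) = 1 / 2 := by rw [hδdef]; field_simp [ha.ne']; ring
        have h4 : ‖v‖ ≤ (1 / 2) * ‖v‖ := by
          calc ‖v‖ ≤ a * ((δ + δ) * ‖v‖) := h2
            _ = (a * (δ + δ)) * ‖v‖ := by ring
            _ = (1 / 2) * ‖v‖ := by rw [h3]
        have h5 : ‖v‖ = 0 := by linarith [norm_nonneg v]
        exact norm_eq_zero.1 h5
      have hunit : IsUnit ((fderiv ℝ (GN N) θN) :
          EuclideanSpace ℝ (Fin p) →ₗ[ℝ] EuclideanSpace ℝ (Fin p)) := by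
        rw [LinearMap.isUnit_iff_ker_eq_bot, LinearMap.ker_eq_bot']
        intro m hm
        exact hker m hm
      have := LinearMap.isUnit_det _ hunit
      exact isUnit_iff_ne_zero.1 this
    -- quantitative bound via the mean value inequality
    have hMV : ‖(G θN - H₀ θN) - (G θ₀ - H₀ θ₀)‖ ≤ δ * ‖θN - θ₀‖ :=
      (convex_closedBall θ₀ r).norm_image_sub_le_of_norm_hasFDerivWithin_le
        (f := fun θ => G θ - H₀ θ) (f' := fun θ => fderiv ℝ G θ - H₀)
        (fun θ hθ => ((hGdiff θ (hrint hθ)).sub H₀.hasFDerivAt).hasFDerivWithinAt)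
        (fun θ hθ => hHnear θ hθ) (mem_closedBall_self hr0.le) hθNball
    have hkey : ‖θN - θ₀‖ ≤ 2 * a * ‖G θN‖ := by
      have h2 : H₀ (θN - θ₀) = G θN - ((G θN - H₀ θN) - (G θ₀ - H₀ θ₀)) := by
        rw [hGθ₀, map_sub]; abel
      have h1 : ‖H₀ (θN - θ₀)‖ ≤ ‖G θN‖ + δ * ‖θN - θ₀‖ := by
        calc ‖H₀ (θN - θ₀)‖ = ‖G θN - ((G θN - H₀ θN) - (G θ₀ - H₀ θ₀))‖ := by rw [h2]
          _ ≤ ‖G θN‖ + ‖(G θN - H₀ θN) - (G θ₀ - H₀ θ₀)‖ := norm_sub_le _ _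
          _ ≤ ‖G θN‖ + δ * ‖θN - θ₀‖ := by linarith
      have h3 : ‖θN - θ₀‖ ≤ a * (‖G θN‖ + δ * ‖θN - θ₀‖) :=
        (hvleA _).trans (mul_le_mul_of_nonneg_left h1 ha.le)
      have h4 : a * δ = 1 / 4 := by rw [hδdef]; field_simp [ha.ne']
      have h5 : ‖θN - θ₀‖ ≤ a * ‖G θN‖ + (1 / 4) * ‖θN - θ₀‖ := by
        calc ‖θN - θ₀‖ ≤ a * (‖G θN‖ + δ * ‖θN - θ₀‖) := h3
          _ = a * ‖G θN‖ + (a * δ) * ‖θN - θ₀‖ := by ring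
          _ = a * ‖G θN‖ + (1 / 4) * ‖θN - θ₀‖ := by rw [h4]
      have hag : 0 ≤ a * ‖G θN‖ := mul_nonneg ha.le (norm_nonneg _)
      linarith
    have hnorm_eq : ‖GN N θN - G θN‖ = ‖G θN‖ := by rw [hGNzero, zero_sub, norm_neg]
    refine ⟨θN, ?_, hGNzero, hdetN, ?_, ?_⟩
    · rw [mem_ball]
      exact lt_of_le_of_lt (mem_closedBall.1 hθNball) hrε
    · rw [hnorm_eq]
      exact hkey
    · apply mul_le_mul_of_nonneg_left _ (by positivity)
      have hcont2 : ContinuousOn (fun θ => ‖GN N θ - G θ‖) Θ :=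
        (((hGN N).continuousOn).sub hG.continuousOn).norm
      have hbdd : BddAbove ((fun θ => ‖GN N θ - G θ‖) '' Θ) :=
        (hΘ.image_of_continuousOn hcont2).bddAbove
      exact le_csSup hbdd ⟨θN, hθNΘ, rfl⟩
end
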